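/- Let ε ≥ 0, k > 0, let v : ℝ³ → ℝ³ be a C¹ vector field, let λ : ℝ³ → ℝ be a C² function with compact support, and define G := −εΔλ + kλ + v·∇λ + ½(div v)λ. Then k·‖λ‖_{L²(ℝ³)} ≤ ‖G‖_{L²(ℝ³)}. -/

import Mathlib

open MeasureTheory

noncomputable section

/-- Partial derivative in the `i`-th coordinate direction on `ℝ³`. -/
def pd {F : Type*} [NormedAddCommGroup F] [NormedSpace ℝ F]
    (f : EuclideanSpace ℝ (Fin 3) → F) (i : Fin 3) (x : EuclideanSpace ℝ (Fin 3)) : F :=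
  fderiv ℝ f x (EuclideanSpace.single i 1)

/-- Divergence of a vector field on `ℝ³`. -/
def divg (v : EuclideanSpace ℝ (Fin 3) → EuclideanSpace ℝ (Fin 3))
    (x : EuclideanSpace ℝ (Fin 3)) : ℝ :=
  ∑ i, pd (fun y => v y i) i x

/-- Laplacian on `ℝ³`. -/
def lap {F : Type*} [NormedAddCommGroup F] [NormedSpace ℝ F]
    (f : EuclideanSpace ℝ (Fin 3) → F) (x : EuclideanSpace ℝ (Fin 3)) : F :=
  ∑ i, pd (pd f i) i x

private abbrev E3 := EuclideanSpace ℝ (Fin 3)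

private lemma contDiff_pd {f : E3 → ℝ} (hf : ContDiff ℝ 2 f) (i : Fin 3) :
    ContDiff ℝ 1 (pd f i) :=
  (hf.fderiv_right (by norm_num)).clm_apply contDiff_const

private lemma continuous_pd {f : E3 → ℝ} (hf : ContDiff ℝ 1 f) (i : Fin 3) :
    Continuous (pd f i) :=
  (hf.continuous_fderiv one_ne_zero).clm_apply continuous_const

private lemma hcs_pd {f : E3 → ℝ} (hf : HasCompactSupport f) (i : Fin 3) :
    HasCompactSupport (pd f i) :=
  hf.fderiv_apply ℝ _

private lemma pd_mul {a b : E3 → ℝ} (ha : Differentiable ℝ a) (hb : Differentiable ℝ b)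
    (i : Fin 3) (x : E3) :
    pd (fun y => a y * b y) i x = pd a i x * b x + a x * pd b i x := by
  unfold pd
  rw [fderiv_fun_mul (ha x) (hb x)]
  simp [ContinuousLinearMap.add_apply, ContinuousLinearMap.smul_apply, smul_eq_mul]
  ring

private lemma integ {f : E3 → ℝ} (hc : Continuous f) (hs : HasCompactSupport f) :
    Integrable f volume :=
  hc.integrable_of_hasCompactSupport hs

private lemma ibp {f g : E3 → ℝ} (hf : ContDiff ℝ 1 f) (hg : ContDiff ℝ 1 g)
    (hsf : HasCompactSupport f) (i : Fin 3) :
    ∫ x, f x * pd g i x = - ∫ x, pd f i x * g x := by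
  have h1 : Integrable (fun x => pd f i x * g x) volume :=
    integ ((continuous_pd hf i).mul hg.continuous) ((hcs_pd hsf i).mul_right)
  have h2 : Integrable (fun x => f x * pd g i x) volume :=
    integ (hf.continuous.mul (continuous_pd hg i)) (hsf.mul_right)
  have h3 : Integrable (fun x => f x * g x) volume :=
    integ (hf.continuous.mul hg.continuous) (hsf.mul_right)
  exact integral_mul_fderiv_eq_neg_fderiv_mul_of_integrable h1 h2 h3
    (fun x _ => hf.differentiable one_ne_zero x) (fun x _ => hg.differentiable one_ne_zero x)

/-- the a priori `L²` estimate `k ‖λ‖_{L²} ≤ ‖G‖_{L²}` where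
`G = -εΔλ + kλ + v·∇λ + ½(div v)λ`, for `ε ≥ 0`, `k > 0`, a `C¹` vector field
`v`, and a compactly supported `C²` function `λ` on `ℝ³`. -/
theorem apriori_L2_estimate
    (ε k : ℝ) (hε : 0 ≤ ε) (hk : 0 < k)
    (v : EuclideanSpace ℝ (Fin 3) → EuclideanSpace ℝ (Fin 3))
    (l : EuclideanSpace ℝ (Fin 3) → ℝ)
    (hv : ContDiff ℝ 1 v) (hl : ContDiff ℝ 2 l) (hls : HasCompactSupport l)
    (G : EuclideanSpace ℝ (Fin 3) → ℝ)
    (hG : G = fun x => -ε * lap l x + k * l x + (∑ i, v x i * pd l i x)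
        + (1 / 2) * divg v x * l x) :
    k * (∫ x, (l x) ^ 2) ^ ((1 : ℝ) / 2) ≤ (∫ x, (G x) ^ 2) ^ ((1 : ℝ) / 2) := by
  have hl1 : ContDiff ℝ 1 l := hl.of_le one_le_two
  have hlc : Continuous l := hl.continuous
  have hvC : ∀ i, ContDiff ℝ 1 (fun x => v x i) := fun i =>
    (EuclideanSpace.proj i : EuclideanSpace ℝ (Fin 3) →L[ℝ] ℝ).contDiff.comp hv
  have hpdlC : ∀ i, Continuous (pd l i) := fun i => continuous_pd hl1 i
  have hpdls : ∀ i, HasCompactSupport (pd l i) := fun i => hcs_pd hls i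
  have hpd2C : ∀ i, Continuous (pd (pd l i) i) := fun i => continuous_pd (contDiff_pd hl i) i
  have hpdvC : ∀ i, Continuous (pd (fun y => v y i) i) := fun i => continuous_pd (hvC i) i
  have hl2s : HasCompactSupport (fun x => (l x) ^ 2) :=
    hls.comp_left (g := fun y : ℝ => y ^ 2) (by simp)
  have iP : Integrable (fun x => (l x) ^ 2) volume := integ (hlc.pow 2) hl2s
  have iLap : ∀ i, Integrable (fun x => pd (pd l i) i x * l x) volume :=
    fun i => integ ((hpd2C i).mul hlc) hls.mul_left
  have iV : ∀ i, Integrable (fun x => v x i * pd l i x * l x) volume :=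
    fun i => integ (((hvC i).continuous.mul (hpdlC i)).mul hlc) hls.mul_left
  have iJ : ∀ i, Integrable (fun x => pd (fun y => v y i) i x * (l x) ^ 2) volume :=
    fun i => integ ((hpdvC i).mul (hlc.pow 2)) hl2s.mul_left
  have iI : ∀ i, Integrable (fun x => (pd l i x) ^ 2) volume :=
    fun i => integ ((hpdlC i).pow 2) ((hpdls i).comp_left (g := fun y : ℝ => y ^ 2) (by simp))
  -- integration by parts identities
  have hΔ : ∀ i, ∫ x, pd (pd l i) i x * l x = - ∫ x, (pd l i x) ^ 2 := by
    intro i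
    have h := ibp hl1 (contDiff_pd hl i) hls i
    rw [show (fun x => l x * pd (pd l i) i x) = fun x => pd (pd l i) i x * l x from
      funext fun x => mul_comm _ _] at h
    rw [show (fun x => pd l i x * pd l i x) = fun x => (pd l i x) ^ 2 from
      funext fun x => (pow_two _).symm] at h
    exact h
  have hV : ∀ i, ∫ x, v x i * pd l i x * l x
      = -(1 / 2 * ∫ x, pd (fun y => v y i) i x * (l x) ^ 2) := by
    intro i
    have ha : ContDiff ℝ 1 (fun x => v x i * l x) := (hvC i).mul hl1
    have hsa : HasCompactSupport (fun x => v x i * l x) := hls.mul_left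
    have h := ibp ha hl1 hsa i
    rw [show (fun x => pd (fun y => v y i * l y) i x * l x)
        = fun x => pd (fun y => v y i) i x * (l x) ^ 2 + v x i * pd l i x * l x from
      funext fun x => by
        rw [pd_mul ((hvC i).differentiable one_ne_zero) (hl1.differentiable one_ne_zero)]; ring] at h
    rw [integral_add (iJ i) (iV i)] at h
    rw [show (fun x => v x i * l x * pd l i x) = fun x => v x i * pd l i x * l x from
      funext fun x => by ring] at h
    linarith
  -- value of ∫ G l
  have iT1 : Integrable (fun x => ∑ i, -ε * (pd (pd l i) i x * l x)) volume :=
    integrable_finset_sum _ fun i _ => (iLap i).const_mul _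
  have iT2 : Integrable (fun x => k * (l x) ^ 2) volume := iP.const_mul k
  have iT3 : Integrable (fun x => ∑ i, v x i * pd l i x * l x) volume :=
    integrable_finset_sum _ fun i _ => iV i
  have iT4 : Integrable (fun x => ∑ i, 1 / 2 * (pd (fun y => v y i) i x * (l x) ^ 2)) volume :=
    integrable_finset_sum _ fun i _ => (iJ i).const_mul _
  have key : ∀ x, G x * l x = (∑ i, -ε * (pd (pd l i) i x * l x)) + k * (l x) ^ 2
      + (∑ i, v x i * pd l i x * l x)
      + (∑ i, 1 / 2 * (pd (fun y => v y i) i x * (l x) ^ 2)) := by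
    intro x
    rw [hG]
    simp only [lap, divg, Fin.sum_univ_three]
    ring
  have s1 : ∫ x, ((∑ i, -ε * (pd (pd l i) i x * l x)) + k * (l x) ^ 2
        + (∑ i, v x i * pd l i x * l x)
        + (∑ i, 1 / 2 * (pd (fun y => v y i) i x * (l x) ^ 2)))
      = (∫ x, ((∑ i, -ε * (pd (pd l i) i x * l x)) + k * (l x) ^ 2
        + (∑ i, v x i * pd l i x * l x)))
        + ∫ x, (∑ i, 1 / 2 * (pd (fun y => v y i) i x * (l x) ^ 2)) :=
    integral_add ((iT1.add iT2).add iT3) iT4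
  have s2 : ∫ x, ((∑ i, -ε * (pd (pd l i) i x * l x)) + k * (l x) ^ 2
        + (∑ i, v x i * pd l i x * l x))
      = (∫ x, ((∑ i, -ε * (pd (pd l i) i x * l x)) + k * (l x) ^ 2))
        + ∫ x, (∑ i, v x i * pd l i x * l x) :=
    integral_add (iT1.add iT2) iT3
  have s3 : ∫ x, ((∑ i, -ε * (pd (pd l i) i x * l x)) + k * (l x) ^ 2)
      = (∫ x, (∑ i, -ε * (pd (pd l i) i x * l x))) + ∫ x, k * (l x) ^ 2 :=
    integral_add iT1 iT2
  have t1 : ∫ x, ∑ i, -ε * (pd (pd l i) i x * l x)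
      = ∑ i, ∫ x, -ε * (pd (pd l i) i x * l x) :=
    integral_finset_sum _ (fun i _ => (iLap i).const_mul _)
  have t3 : ∫ x, ∑ i, v x i * pd l i x * l x = ∑ i, ∫ x, v x i * pd l i x * l x :=
    integral_finset_sum _ (fun i _ => iV i)
  have t4 : ∫ x, ∑ i, 1 / 2 * (pd (fun y => v y i) i x * (l x) ^ 2)
      = ∑ i, ∫ x, 1 / 2 * (pd (fun y => v y i) i x * (l x) ^ 2) :=
    integral_finset_sum _ (fun i _ => (iJ i).const_mul _)
  have hBsplit : ∫ x, G x * l x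
      = ε * (∑ i, ∫ x, (pd l i x) ^ 2) + k * ∫ x, (l x) ^ 2 := by
    simp_rw [key]
    rw [s1, s2, s3, t1, t3, t4]
    simp_rw [integral_const_mul]
    simp only [hΔ, hV]
    simp only [mul_neg, neg_mul, neg_neg, Finset.sum_neg_distrib, ← Finset.mul_sum]
    ring
  -- continuity and support of G
  have hlapC : Continuous (lap l) := by
    unfold lap; exact continuous_finset_sum _ fun i _ => hpd2C i
  have hdivC : Continuous (divg v) := by
    unfold divg; exact continuous_finset_sum _ fun i _ => hpdvC i
  have hGc : Continuous G := by
    rw [hG]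
    exact (((continuous_const.mul hlapC).add (continuous_const.mul hlc)).add
      (continuous_finset_sum _ fun i _ => ((hvC i).continuous.mul (hpdlC i)))).add
      ((continuous_const.mul hdivC).mul hlc)
  have hlaps : HasCompactSupport (lap l) := by
    have h : ∀ i : Fin 3, HasCompactSupport (pd (pd l i) i) := fun i => hcs_pd (hpdls i) i
    show HasCompactSupport fun x => ∑ i, pd (pd l i) i x
    simp only [Fin.sum_univ_three]
    exact ((h 0).add (h 1)).add (h 2)
  have hsum3 : HasCompactSupport (fun x => ∑ i, v x i * pd l i x) := by
    have h : ∀ i : Fin 3, HasCompactSupport (fun x => v x i * pd l i x) :=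
      fun i => (hpdls i).mul_left
    simp only [Fin.sum_univ_three]
    exact ((h 0).add (h 1)).add (h 2)
  have hGs : HasCompactSupport G := by
    rw [hG]
    exact ((hlaps.mul_left.add hls.mul_left).add hsum3).add hls.mul_left
  have hiG2 : Integrable (fun x => (G x) ^ 2) volume :=
    integ (hGc.pow 2) (hGs.comp_left (g := fun y : ℝ => y ^ 2) (by simp))
  have hiGl : Integrable (fun x => G x * l x) volume := integ (hGc.mul hlc) hls.mul_left
  -- abbreviations
  set A := ∫ x, (l x) ^ 2 with hAdef
  set B := ∫ x, G x * l x with hBdef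
  set C := ∫ x, (G x) ^ 2 with hCdef
  have hA0 : 0 ≤ A := integral_nonneg fun x => sq_nonneg _
  have hC0 : 0 ≤ C := integral_nonneg fun x => sq_nonneg _
  have hkA : k * A ≤ B := by
    rw [hBsplit]
    have hI0 : 0 ≤ ∑ i, ∫ x, (pd l i x) ^ 2 :=
      Finset.sum_nonneg fun i _ => integral_nonneg fun x => sq_nonneg _
    nlinarith
  -- Cauchy-Schwarz via discriminant
  have hq : ∀ t : ℝ, 0 ≤ C * (t * t) + 2 * B * t + A := by
    intro t
    have h1 : (0:ℝ) ≤ ∫ x, (t * G x + l x) ^ 2 := integral_nonneg fun x => sq_nonneg _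
    have u1 : ∫ x, (t ^ 2 * (G x) ^ 2 + 2 * t * (G x * l x) + (l x) ^ 2)
        = (∫ x, (t ^ 2 * (G x) ^ 2 + 2 * t * (G x * l x))) + ∫ x, (l x) ^ 2 :=
      integral_add ((hiG2.const_mul _).add (hiGl.const_mul _)) iP
    have u2 : ∫ x, (t ^ 2 * (G x) ^ 2 + 2 * t * (G x * l x))
        = (∫ x, t ^ 2 * (G x) ^ 2) + ∫ x, 2 * t * (G x * l x) :=
      integral_add (hiG2.const_mul _) (hiGl.const_mul _)
    have h2 : ∫ x, (t * G x + l x) ^ 2 = C * (t * t) + 2 * B * t + A := by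
      rw [show (fun x => (t * G x + l x) ^ 2)
          = fun x => t ^ 2 * (G x) ^ 2 + 2 * t * (G x * l x) + (l x) ^ 2 from
        funext fun x => by ring]
      rw [u1, u2, integral_const_mul, integral_const_mul]
      rw [← hAdef, ← hBdef, ← hCdef]
      ring
    linarith [h2 ▸ h1]
  have hdisc := discrim_le_zero hq
  rw [discrim] at hdisc
  have hBB : B ^ 2 ≤ C * A := by nlinarith
  -- conclude
  rw [← Real.sqrt_eq_rpow, ← Real.sqrt_eq_rpow]
  rcases eq_or_lt_of_le hA0 with h0 | hApos
  · rw [← h0, Real.sqrt_zero, mul_zero]; exact Real.sqrt_nonneg _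
  · have h1 : k ^ 2 * A ≤ C := by
      have hkA0 : (0:ℝ) ≤ k * A := mul_nonneg hk.le hA0
      have h2 : (k * A) ^ 2 ≤ B ^ 2 := pow_le_pow_left₀ hkA0 hkA 2
      exact le_of_mul_le_mul_right (by nlinarith) hApos
    calc k * Real.sqrt A = Real.sqrt (k ^ 2 * A) := by
          rw [Real.sqrt_mul (sq_nonneg k), Real.sqrt_sq hk.le]
      _ ≤ Real.sqrt C := Real.sqrt_le_sqrt h1

end
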